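/- Each of the five sets of triples on a three-element set {a,b,c} — ∅, {(a,b,c)}, {(a,b,c),(c,b,a)}, {(a,b,c),(b,c,a)}, and {(a,b,c),(b,c,a),(c,a,b)} — is the betweenness of some quasi-metric on {a,b,c}. -/
import Mathlib


/-- A quasi-metric on `V`: nonnegative, vanishing exactly on the diagonal,
and satisfying the (directed) triangle inequality. -/
def IsQuasiMetric {V : Type*} (d : V → V → ℝ) : Prop :=
  (∀ x y, 0 ≤ d x y) ∧ (∀ x y, d x y = 0 ↔ x = y) ∧ (∀ x y z, d x z ≤ d x y + d y z)

/-- Betweenness: `y` lies between `x` and `z` (all three pairwise distinct). -/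
def BtwQM {V : Type*} (d : V → V → ℝ) (x y z : V) : Prop :=
  x ≠ y ∧ y ≠ z ∧ x ≠ z ∧ d x z = d x y + d y z

/-- The line through `x` and `y`. -/
def lineQM {V : Type*} (d : V → V → ℝ) (x y : V) : Set V :=
  {z | d z y = d z x + d x y ∨ d x y = d x z + d z y ∨ d x z = d x y + d y z}

/-- The set of all lines of the space. -/
def linesQM {V : Type*} (d : V → V → ℝ) : Set (Set V) :=
  {ℓ | ∃ x y, x ≠ y ∧ ℓ = lineQM d x y}

/-- The five candidate betweennesses on a three-element set `{a, b, c}`. -/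
def trip3 {V : Type*} (a b c : V) : Fin 5 → Set (V × V × V)
  | 0 => ∅
  | 1 => {(a, b, c)}
  | 2 => {(a, b, c), (c, b, a)}
  | 3 => {(a, b, c), (b, c, a)}
  | 4 => {(a, b, c), (b, c, a), (c, a, b)}

/-- A three-element set `{a, b, c}`. -/
inductive P3 : Type
  | a | b | c
deriving DecidableEq


noncomputable section
open P3

def d0 : P3 → P3 → ℝ := fun x y => if x = y then 0 else 1
def d1 : P3 → P3 → ℝ
  | a, b => 1 | b, c => 1 | a, c => 2
  | b, a => 2 | c, b => 2 | c, a => 2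
  | _, _ => 0
def d2 : P3 → P3 → ℝ
  | a, b => 1 | b, c => 1 | a, c => 2
  | b, a => 1 | c, b => 1 | c, a => 2
  | _, _ => 0
def d3 : P3 → P3 → ℝ
  | a, b => 1 | b, c => 1 | a, c => 2
  | c, a => 1 | b, a => 2 | c, b => 3/2
  | _, _ => 0
def d4 : P3 → P3 → ℝ
  | a, b => 1 | b, c => 1 | c, a => 1
  | a, c => 2 | b, a => 2 | c, b => 2
  | _, _ => 0

end

theorem h0 : IsQuasiMetric d0 ∧
    {t : P3 × P3 × P3 | BtwQM d0 t.1 t.2.1 t.2.2} = trip3 P3.a P3.b P3.c 0 := by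
  refine ⟨⟨fun x y => ?_, fun x y => ?_, fun x y z => ?_⟩, ?_⟩
  · cases x <;> cases y <;> simp [d0] <;> norm_num
  · cases x <;> cases y <;> simp [d0] <;> norm_num
  · cases x <;> cases y <;> cases z <;> simp [d0] <;> norm_num
  · ext ⟨x, y, z⟩
    cases x <;> cases y <;> cases z <;>
      simp [BtwQM, trip3, d0, Prod.ext_iff] <;> norm_num

theorem h1 : IsQuasiMetric d1 ∧
    {t : P3 × P3 × P3 | BtwQM d1 t.1 t.2.1 t.2.2} = trip3 P3.a P3.b P3.c 1 := by
  refine ⟨⟨fun x y => ?_, fun x y => ?_, fun x y z => ?_⟩, ?_⟩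
  · cases x <;> cases y <;> simp [d1] <;> norm_num
  · cases x <;> cases y <;> simp [d1] <;> norm_num
  · cases x <;> cases y <;> cases z <;> simp [d1] <;> norm_num
  · ext ⟨x, y, z⟩
    cases x <;> cases y <;> cases z <;>
      simp [BtwQM, trip3, d1, Prod.ext_iff] <;> norm_num

theorem h2 : IsQuasiMetric d2 ∧
    {t : P3 × P3 × P3 | BtwQM d2 t.1 t.2.1 t.2.2} = trip3 P3.a P3.b P3.c 2 := by
  refine ⟨⟨fun x y => ?_, fun x y => ?_, fun x y z => ?_⟩, ?_⟩
  · cases x <;> cases y <;> simp [d2] <;> norm_num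
  · cases x <;> cases y <;> simp [d2] <;> norm_num
  · cases x <;> cases y <;> cases z <;> simp [d2] <;> norm_num
  · ext ⟨x, y, z⟩
    cases x <;> cases y <;> cases z <;>
      simp [BtwQM, trip3, d2, Prod.ext_iff] <;> norm_num

theorem h3 : IsQuasiMetric d3 ∧
    {t : P3 × P3 × P3 | BtwQM d3 t.1 t.2.1 t.2.2} = trip3 P3.a P3.b P3.c 3 := by
  refine ⟨⟨fun x y => ?_, fun x y => ?_, fun x y z => ?_⟩, ?_⟩
  · cases x <;> cases y <;> simp [d3] <;> norm_num
  · cases x <;> cases y <;> simp [d3] <;> norm_num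
  · cases x <;> cases y <;> cases z <;> simp [d3] <;> norm_num
  · ext ⟨x, y, z⟩
    cases x <;> cases y <;> cases z <;>
      simp [BtwQM, trip3, d3, Prod.ext_iff] <;> norm_num

theorem h4 : IsQuasiMetric d4 ∧
    {t : P3 × P3 × P3 | BtwQM d4 t.1 t.2.1 t.2.2} = trip3 P3.a P3.b P3.c 4 := by
  refine ⟨⟨fun x y => ?_, fun x y => ?_, fun x y z => ?_⟩, ?_⟩
  · cases x <;> cases y <;> simp [d4] <;> norm_num
  · cases x <;> cases y <;> simp [d4] <;> norm_num
  · cases x <;> cases y <;> cases z <;> simp [d4] <;> norm_num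
  · ext ⟨x, y, z⟩
    cases x <;> cases y <;> cases z <;>
      simp [BtwQM, trip3, d4, Prod.ext_iff] <;> norm_num

/-- each of the five sets of triples on `{a, b, c}` is the
betweenness of some quasi-metric on `{a, b, c}`. -/
theorem stmt_12 :
    ∀ i : Fin 5, ∃ d : P3 → P3 → ℝ, IsQuasiMetric d ∧
      {t : P3 × P3 × P3 | BtwQM d t.1 t.2.1 t.2.2} = trip3 P3.a P3.b P3.c i := by
  intro i
  fin_cases i
  exacts [⟨d0, h0⟩, ⟨d1, h1⟩, ⟨d2, h2⟩, ⟨d3, h3⟩, ⟨d4, h4⟩]
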